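/- Let c_m, c_s > 0 be reals, let f(r) = c_m·r/Q + c_s·(Q−r)/(Q·(r+1)), and assume c_s = f(0) < f(r) for every r ∈ {1,…,Q} (i.e., the minimum of f over {0,…,Q} is attained only at r = 0). Then every (K,N,Q,T)-scheme with singleton Reduce assignment satisfies the strict inequality c_m·p + c_s·L > c_s; in particular no scheme with finitely many servers attains the lower bound min_{r∈{0,…,Q}} f(r) with equality. -/

import Mathlib

/-- A (K,N,Q,T)-scheme: K servers, N input files, Q output functions,
T-bit intermediate values.  `M k` is the set of files mapped by server `k`,
`W k` the set of functions reduced by server `k`, `len k` the length (in bits)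
of server `k`'s message; `enc` produces the message of each server from its
locally computed intermediate values, and `dec` recovers, for each server `k`
and each `q ∈ W k`, the full row of intermediate values of function `q`
from all messages and the local values, correctly for every realization `v`. -/
structure Scheme (K N Q T : ℕ) where
  M : Fin K → Finset (Fin N)
  W : Fin K → Finset (Fin Q)
  cover : ∀ n : Fin N, ∃ k : Fin K, n ∈ M k
  len : Fin K → ℕ
  enc : (k : Fin K) → (Fin Q → {n : Fin N // n ∈ M k} → (Fin T → Bool)) →
    (Fin (len k) → Bool)
  dec : (k : Fin K) → (q : Fin Q) → q ∈ W k →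
    ((j : Fin K) → (Fin (len j) → Bool)) →
    (Fin Q → {n : Fin N // n ∈ M k} → (Fin T → Bool)) →
    (Fin N → Fin T → Bool)
  correct : ∀ (v : Fin Q × Fin N → Fin T → Bool) (k : Fin K) (q : Fin Q) (hq : q ∈ W k),
    dec k q hq (fun j => enc j (fun q' n => v (q', n.1))) (fun q' n => v (q', n.1)) =
      fun n => v (q, n)

/-- Peak computation load `p = (max_k |M k|)/N`. -/
noncomputable def peakLoad {K N Q T : ℕ} (S : Scheme K N Q T) : ℝ :=
  ((Finset.univ.sup (fun k : Fin K => (S.M k).card) : ℕ) : ℝ) / N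

/-- Communication load `L = (∑_k ℓ k)/(Q·N·T)`. -/
noncomputable def commLoad {K N Q T : ℕ} (S : Scheme K N Q T) : ℝ :=
  (∑ k : Fin K, (S.len k : ℝ)) / ((Q : ℝ) * N * T)

/-- Singleton Reduce assignment: the `W k` are pairwise disjoint, cover `Fin Q`,
and each server reduces at most one function. -/
def SingletonReduce {K N Q T : ℕ} (S : Scheme K N Q T) : Prop :=
  (∀ j k : Fin K, j ≠ k → Disjoint (S.W j) (S.W k)) ∧
  (∀ q : Fin Q, ∃ k : Fin K, q ∈ S.W k) ∧
  (∀ k : Fin K, (S.W k).card ≤ 1)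
/-- Extend a function defined on the "free" coordinates `{(q,n) : n ∈ C q}`
to all of `Fin Q × Fin N` by zero. -/
def extFun {N Q T : ℕ} (C : Fin Q → Finset (Fin N))
    (w : ∀ q : Fin Q, {n : Fin N // n ∈ C q} → Fin T → Bool) :
    Fin Q × Fin N → Fin T → Bool :=
  fun x => if h : x.2 ∈ C x.1 then w x.1 ⟨x.2, h⟩ else fun _ => false

/-- All messages produced by a scheme on realization `v`. -/
def encAll {K N Q T : ℕ} (S : Scheme K N Q T) (v : Fin Q × Fin N → Fin T → Bool) :
    (j : Fin K) → Fin (S.len j) → Bool :=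
  fun j => S.enc j (fun q' n => v (q', n.1))

lemma gauss_real (n : ℕ) : ∑ i ∈ Finset.range n, ((i : ℝ) + 1) = n * (n + 1) / 2 := by
  induction n with
  | zero => simp
  | succ n ih =>
    rw [Finset.sum_range_succ, ih]
    push_cast
    ring

lemma count_lemma {Q K T N : ℕ} (C : Fin Q → Finset (Fin N)) (len : Fin K → ℕ)
    (g : (∀ q : Fin Q, {n : Fin N // n ∈ C q} → Fin T → Bool) →
      ((j : Fin K) → Fin (len j) → Bool))
    (hg : Function.Injective g) :
    T * ∑ q : Fin Q, (C q).card ≤ ∑ j : Fin K, len j := by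
  have hcard := Fintype.card_le_of_injective g hg
  simp only [Fintype.card_pi, Fintype.card_fun, Fintype.card_coe, Fintype.card_fin,
    Fintype.card_bool, Finset.prod_const, Finset.card_univ] at hcard
  -- hcard : ∏ q, (2^T)^(C q).card ≤ ∏ j, 2^(len j) (up to shape)
  have hcard2 : (2:ℕ) ^ (∑ q : Fin Q, T * (C q).card) ≤ 2 ^ (∑ j : Fin K, len j) := by
    rw [← Finset.prod_pow_eq_pow_sum, ← Finset.prod_pow_eq_pow_sum]
    calc ∏ q : Fin Q, (2:ℕ) ^ (T * (C q).card)
        = ∏ q : Fin Q, ((2:ℕ) ^ T) ^ (C q).card := by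
          refine Finset.prod_congr rfl fun q _ => ?_
          rw [pow_mul]
      _ ≤ ∏ j : Fin K, 2 ^ (len j) := by
          convert hcard using 2 <;> simp [Fintype.card_coe, Fintype.card_fin, pow_mul]
  have := (Nat.pow_le_pow_iff_right (by norm_num : 1 < 2)).mp hcard2
  rwa [← Finset.mul_sum] at this

/-- Key injectivity (cut-set) lemma: if for each `q`, `C q` avoids all map sets
of the reducers of functions `q' ≤ q`, then the messages determine the values
on the free coordinates. -/
lemma enc_injective {K N Q T : ℕ} (S : Scheme K N Q T) (σ : Fin Q → Fin K)
    (hσ : ∀ q, q ∈ S.W (σ q)) (C : Fin Q → Finset (Fin N))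
    (hC : ∀ q : Fin Q, ∀ n ∈ C q, ∀ q' : Fin Q, q' ≤ q → n ∉ S.M (σ q')) :
    Function.Injective
      (fun w : (∀ q : Fin Q, {n : Fin N // n ∈ C q} → Fin T → Bool) =>
        encAll S (extFun C w)) := by
  intro w w' h
  have hmsg : encAll S (extFun C w) = encAll S (extFun C w') := h
  -- one decoding step
  have step : ∀ q : Fin Q,
      (∀ q' : Fin Q, q'.val < q.val → ∀ n : Fin N,
        extFun C w (q', n) = extFun C w' (q', n)) →
      ∀ n : Fin N, extFun C w (q, n) = extFun C w' (q, n) := by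
    intro q ih n
    have hloc : (fun (q'' : Fin Q) (nn : {n : Fin N // n ∈ S.M (σ q)}) =>
        extFun C w (q'', nn.1)) =
        (fun q'' nn => extFun C w' (q'', nn.1)) := by
      funext q'' nn
      by_cases hqq : q''.val < q.val
      · exact ih q'' hqq nn.1
      · have hle : q ≤ q'' := by
          rw [Fin.le_def]; omega
        have hnot : nn.1 ∉ C q'' := fun hmem => hC q'' nn.1 hmem q hle nn.2
        simp [extFun, hnot]
    have hc1 := S.correct (extFun C w) (σ q) q (hσ q)
    have hc2 := S.correct (extFun C w') (σ q) q (hσ q)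
    calc extFun C w (q, n)
        = S.dec (σ q) q (hσ q) (encAll S (extFun C w))
            (fun q'' nn => extFun C w (q'', nn.1)) n := (congrFun hc1 n).symm
      _ = S.dec (σ q) q (hσ q) (encAll S (extFun C w'))
            (fun q'' nn => extFun C w' (q'', nn.1)) n := by rw [hmsg, hloc]
      _ = extFun C w' (q, n) := congrFun hc2 n
  have key : ∀ (B : ℕ) (q : Fin Q), q.val ≤ B → ∀ n : Fin N,
      extFun C w (q, n) = extFun C w' (q, n) := by
    intro B
    induction B with
    | zero =>
      intro q hq n
      exact step q (fun q' hq' n' => absurd (lt_of_lt_of_le hq' hq) (Nat.not_lt_zero _)) n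
    | succ B ihB =>
      intro q hq n
      exact step q (fun q' hq' n' => ihB q' (by omega) n') n
  funext q nn
  have hk := key q.val q le_rfl nn.1
  simpa [extFun, nn.2] using hk

/-- if the minimum of `f` over `{0,…,Q}` is attained only at
`r = 0` (where `f 0 = c_s`), then no scheme with singleton Reduce assignment
and finitely many servers attains the bound: `c_m·p + c_s·L > c_s` strictly. -/
theorem no_finite_scheme_attains (Q : ℕ) (hQ : 0 < Q) (cm cs : ℝ) (hcm : 0 < cm)
    (hcs : 0 < cs) (f : ℕ → ℝ)
    (hf : ∀ r : ℕ, f r = cm * (r : ℝ) / Q + cs * ((Q : ℝ) - r) / ((Q : ℝ) * (r + 1)))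
    (hf0 : cs = f 0) (hlt : ∀ r : ℕ, 1 ≤ r → r ≤ Q → f 0 < f r)
    (K N T : ℕ) (hK : 0 < K) (hN : 0 < N) (hT : 0 < T)
    (S : Scheme K N Q T) (hS : SingletonReduce S) :
    cm * peakLoad S + cs * commLoad S > cs := by
  have hQ0 : (0:ℝ) < Q := by exact_mod_cast hQ
  have hN0 : (0:ℝ) < N := by exact_mod_cast hN
  have hT0 : (0:ℝ) < T := by exact_mod_cast hT
  -- from hlt at r = 1 : cm > cs*(Q+1)/2
  have h1 : cs < f 1 := hf0 ▸ hlt 1 le_rfl hQ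
  rw [hf 1] at h1
  push_cast at h1
  have hQne : (Q:ℝ) ≠ 0 := ne_of_gt hQ0
  have hcm2 : cs * ((Q:ℝ) + 1) / 2 < cm := by
    rw [div_add_div _ _ hQne (by positivity), lt_div_iff₀ (by positivity)] at h1
    nlinarith [hQ0]
  -- choose a reducer for each function
  obtain ⟨-, hcov, -⟩ := hS
  choose σ hσ using hcov
  -- the nested unions and their complements
  set U : Fin Q → Finset (Fin N) :=
    fun q => (Finset.Iic q).biUnion (fun q' => S.M (σ q')) with hU
  set C : Fin Q → Finset (Fin N) := fun q => (U q)ᶜ with hCdef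
  have hC : ∀ q : Fin Q, ∀ n ∈ C q, ∀ q' : Fin Q, q' ≤ q → n ∉ S.M (σ q') := by
    intro q n hn q' hq' hmem
    have : n ∈ U q := Finset.mem_biUnion.mpr ⟨q', Finset.mem_Iic.mpr hq', hmem⟩
    simp [hCdef, Finset.mem_compl] at hn
    exact hn this
  have hinj := enc_injective S σ hσ C hC
  have hTA : T * ∑ q : Fin Q, (C q).card ≤ ∑ j : Fin K, S.len j :=
    count_lemma C S.len _ hinj
  -- the peak map size
  set m := Finset.univ.sup (fun k : Fin K => (S.M k).card) with hmdef
  have hmN : ∀ k, (S.M k).card ≤ m := fun k => by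
    rw [hmdef]; exact Finset.le_sup (f := fun k => (S.M k).card) (Finset.mem_univ k)
  have hm1 : 1 ≤ m := by
    obtain ⟨k, hk⟩ := S.cover ⟨0, hN⟩
    exact le_trans (Finset.card_pos.mpr ⟨_, hk⟩) (hmN k)
  have hm0 : (1:ℝ) ≤ (m:ℝ) := by exact_mod_cast hm1
  -- card bounds
  have hUq : ∀ q : Fin Q, (U q).card ≤ (q.val + 1) * m := by
    intro q
    calc (U q).card ≤ ∑ q' ∈ Finset.Iic q, (S.M (σ q')).card := Finset.card_biUnion_le
      _ ≤ ∑ q' ∈ Finset.Iic q, m := Finset.sum_le_sum (fun q' _ => hmN (σ q'))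
      _ = (Finset.Iic q).card * m := by rw [Finset.sum_const, smul_eq_mul]
      _ = (q.val + 1) * m := by rw [Fin.card_Iic]
  have hCq : ∀ q : Fin Q, ((N:ℝ) - ((q.val:ℝ) + 1) * m) ≤ ((C q).card : ℝ) := by
    intro q
    have h1 : (C q).card = N - (U q).card := by
      simp [hCdef, Finset.card_compl, Fintype.card_fin]
    have h2 : (U q).card ≤ N := by
      have := Finset.card_le_univ (U q)
      simpa using this
    rw [h1, Nat.cast_sub h2]
    have h3 : ((U q).card : ℝ) ≤ (((q.val + 1) * m : ℕ) : ℝ) := Nat.cast_le.mpr (hUq q)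
    push_cast at h3
    linarith
  have hsum : (Q:ℝ) * N - (m:ℝ) * ((Q:ℝ) * ((Q:ℝ) + 1) / 2)
      ≤ ((∑ q : Fin Q, (C q).card : ℕ) : ℝ) := by
    push_cast
    have g1 : ∑ q : Fin Q, (((q.val:ℝ)) + 1) = (Q:ℝ) * ((Q:ℝ) + 1) / 2 := by
      rw [Fin.sum_univ_eq_sum_range (fun i => ((i:ℝ) + 1))]
      exact gauss_real Q
    calc (Q:ℝ) * N - (m:ℝ) * ((Q:ℝ) * ((Q:ℝ) + 1) / 2)
        = ∑ q : Fin Q, ((N:ℝ) - ((q.val:ℝ) + 1) * m) := by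
          rw [Finset.sum_sub_distrib, Finset.sum_const, Finset.card_univ, Fintype.card_fin,
            ← Finset.sum_mul, g1]
          push_cast
          ring
      _ ≤ ∑ q : Fin Q, ((C q).card : ℝ) := Finset.sum_le_sum fun q _ => hCq q
  -- total message length bound, over ℝ
  set A : ℕ := ∑ j : Fin K, S.len j with hAdef
  have hA : (T:ℝ) * ((Q:ℝ) * N - (m:ℝ) * ((Q:ℝ) * ((Q:ℝ) + 1) / 2)) ≤ (A:ℝ) := by
    have h4 : ((T * ∑ q : Fin Q, (C q).card : ℕ) : ℝ) ≤ (A:ℝ) := Nat.cast_le.mpr hTA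
    push_cast at h4
    have hsum' := hsum
    push_cast at hsum'
    have := mul_le_mul_of_nonneg_left hsum' hT0.le
    linarith
  -- final arithmetic
  rw [gt_iff_lt]
  unfold peakLoad commLoad
  have hsumlen : (∑ k : Fin K, (S.len k : ℝ)) = (A:ℝ) := by
    rw [hAdef]; push_cast; rfl
  rw [hsumlen, ← hmdef]
  have heq : cm * ((m:ℝ) / N) + cs * ((A:ℝ) / ((Q:ℝ) * N * T))
      = (cm * m * ((Q:ℝ) * T) + cs * A) / ((Q:ℝ) * N * T) := by
    field_simp
  rw [heq, lt_div_iff₀ (by positivity)]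
  have h5 : 0 < (cm - cs * ((Q:ℝ) + 1) / 2) * ((m:ℝ) * ((Q:ℝ) * T)) :=
    mul_pos (by linarith) (by positivity)
  have h6 : 0 ≤ cs * ((A:ℝ) - (T:ℝ) * ((Q:ℝ) * N - (m:ℝ) * ((Q:ℝ) * ((Q:ℝ) + 1) / 2))) :=
    mul_nonneg hcs.le (by linarith)
  nlinarith [h5, h6]
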